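/- Fix 0 < μ < v̄. For any posted price v₁ with 0 < v₁ ≤ μ, the infimum over F in the mean ambiguity set 𝓕_mean of the ratio v₁·F([v₁, v̄]) / OPT(F) equals min{ v₁/v̄, (μ − v₁)/(v̄ − v₁) }. Moreover, for any posted price v₁ with μ < v₁ ≤ v̄, this infimum equals 0. -/

import Mathlib

open MeasureTheory Set
open ENNReal

noncomputable section

/-- Hindsight optimal revenue: `OPT(F) = sup_{p ∈ [0, v̄]} p · F([p, v̄])`. -/
def hindsightOpt (vbar : ℝ) (F : Measure ℝ) : ℝ :=
  ⨆ p : Icc (0 : ℝ) vbar, (p : ℝ) * (F (Icc (p : ℝ) vbar)).toReal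

/-- The mean ambiguity set: probability measures on `[0, v̄]` with mean at least `μ`. -/
def Fmean (μ vbar : ℝ) : Set (Measure ℝ) :=
  {F | IsProbabilityMeasure F ∧ F (Icc (0 : ℝ) vbar) = 1 ∧ μ ≤ ∫ t, t ∂F}

namespace Stmt4Aux

/-- Two-point measure with mass `1-q` at `x` and `q` at `vbar`. -/
def twoPt (x q vbar : ℝ) : Measure ℝ :=
  ENNReal.ofReal (1 - q) • Measure.dirac x + ENNReal.ofReal q • Measure.dirac vbar

lemma twoPt_apply (x q vbar : ℝ) {s : Set ℝ} (hs : MeasurableSet s) :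
    twoPt x q vbar s =
      ENNReal.ofReal (1 - q) * s.indicator 1 x + ENNReal.ofReal q * s.indicator 1 vbar := by
  simp [twoPt, Measure.dirac_apply' _ hs]

lemma integrable_id_dirac (a : ℝ) : Integrable (fun t : ℝ => t) (Measure.dirac a) := by
  refine ⟨measurable_id.aestronglyMeasurable, ?_⟩
  simpa [HasFiniteIntegral] using
    (by rw [lintegral_dirac]; exact ENNReal.coe_lt_top :
      ∫⁻ t, (‖t‖₊ : ℝ≥0∞) ∂Measure.dirac a < ⊤)

lemma integral_twoPt {q : ℝ} (x vbar : ℝ) (hq0 : 0 ≤ q) (hq1 : q ≤ 1) :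
    ∫ t, t ∂(twoPt x q vbar) = (1 - q) * x + q * vbar := by
  rw [twoPt, integral_add_measure ((integrable_id_dirac x).smul_measure ENNReal.ofReal_ne_top)
      ((integrable_id_dirac vbar).smul_measure ENNReal.ofReal_ne_top),
    integral_smul_measure, integral_smul_measure, integral_dirac, integral_dirac,
    ENNReal.toReal_ofReal (by linarith), ENNReal.toReal_ofReal hq0]
  simp [smul_eq_mul]

lemma twoPt_isProb {q : ℝ} (x vbar : ℝ) (hq0 : 0 ≤ q) (hq1 : q ≤ 1) :
    IsProbabilityMeasure (twoPt x q vbar) := by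
  constructor
  rw [twoPt_apply _ _ _ MeasurableSet.univ]
  simp [← ENNReal.ofReal_add (by linarith : (0:ℝ) ≤ 1 - q) hq0]

lemma twoPt_mem_Fmean {μ x q vbar : ℝ} (hx0 : 0 ≤ x) (hxv : x ≤ vbar) (hq0 : 0 ≤ q)
    (hq1 : q ≤ 1) (hmean : μ ≤ (1 - q) * x + q * vbar) : twoPt x q vbar ∈ Fmean μ vbar := by
  refine ⟨twoPt_isProb x vbar hq0 hq1, ?_, ?_⟩
  · rw [twoPt_apply _ _ _ measurableSet_Icc,
      indicator_of_mem (by exact ⟨hx0, hxv⟩) (1 : ℝ → ℝ≥0∞),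
      indicator_of_mem (by exact ⟨hx0.trans hxv, le_refl _⟩) (1 : ℝ → ℝ≥0∞)]
    simp [← ENNReal.ofReal_add (by linarith : (0:ℝ) ≤ 1 - q) hq0]
  · rw [integral_twoPt x vbar hq0 hq1]; exact hmean

lemma twoPt_Icc_toReal {x q v1 vbar : ℝ} (hx : x < v1) (hv : v1 ≤ vbar) (hq0 : 0 ≤ q) :
    ((twoPt x q vbar) (Icc v1 vbar)).toReal = q := by
  rw [twoPt_apply _ _ _ measurableSet_Icc,
    indicator_of_notMem (by intro h; exact absurd h.1 (not_le.2 hx)) (1 : ℝ → ℝ≥0∞),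
    indicator_of_mem (by exact ⟨hv, le_refl _⟩) (1 : ℝ → ℝ≥0∞)]
  simp [ENNReal.toReal_ofReal hq0]

lemma twoPt_Icc_self {x q vbar : ℝ} (hx : x ≤ vbar) (hq0 : 0 ≤ q) (hq1 : q ≤ 1) :
    ((twoPt x q vbar) (Icc x vbar)).toReal = 1 := by
  rw [twoPt_apply _ _ _ measurableSet_Icc,
    indicator_of_mem (by exact ⟨le_refl _, hx⟩) (1 : ℝ → ℝ≥0∞),
    indicator_of_mem (by exact ⟨hx, le_refl _⟩) (1 : ℝ → ℝ≥0∞)]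
  simp [← ENNReal.ofReal_add (by linarith : (0:ℝ) ≤ 1 - q) hq0]

lemma opt_nonneg {vbar : ℝ} (hv : 0 ≤ vbar) (F : Measure ℝ) : 0 ≤ hindsightOpt vbar F :=
  Real.iSup_nonneg fun p => mul_nonneg p.2.1 ENNReal.toReal_nonneg

lemma toReal_le_one {F : Measure ℝ} [IsProbabilityMeasure F] (s : Set ℝ) :
    (F s).toReal ≤ 1 := by
  have := prob_le_one (μ := F) (s := s)
  simpa using ENNReal.toReal_mono ENNReal.one_ne_top this

lemma le_opt {vbar : ℝ} {F : Measure ℝ} [IsProbabilityMeasure F] {p : ℝ}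
    (hp : p ∈ Icc (0:ℝ) vbar) :
    p * (F (Icc p vbar)).toReal ≤ hindsightOpt vbar F := by
  refine le_ciSup (f := fun p : Icc (0:ℝ) vbar => (p : ℝ) * (F (Icc (p:ℝ) vbar)).toReal)
    ⟨vbar, ?_⟩ ⟨p, hp⟩
  rintro y ⟨r, rfl⟩
  calc (r : ℝ) * (F (Icc (r:ℝ) vbar)).toReal ≤ (r:ℝ) * 1 :=
        mul_le_mul_of_nonneg_left (toReal_le_one _) r.2.1
    _ ≤ vbar := by rw [mul_one]; exact r.2.2

lemma opt_le {vbar B : ℝ} {F : Measure ℝ} (hv : 0 ≤ vbar)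
    (h : ∀ p : ℝ, 0 ≤ p → p ≤ vbar → p * (F (Icc p vbar)).toReal ≤ B) :
    hindsightOpt vbar F ≤ B := by
  have : Nonempty (Icc (0:ℝ) vbar) := ⟨⟨0, by simp [hv]⟩⟩
  exact ciSup_le fun p => h p p.2.1 p.2.2


lemma ratio_lower {μ vbar v1 : ℝ} (hμ : 0 < μ) (hμv : μ < vbar) (hv1 : 0 < v1)
    (hv1μ : v1 ≤ μ) {F : Measure ℝ} (hF : F ∈ Fmean μ vbar) :
    min (v1 / vbar) ((μ - v1) / (vbar - v1)) ≤
      v1 * (F (Icc v1 vbar)).toReal / hindsightOpt vbar F := by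
  obtain ⟨hprob, hsupp, hmean⟩ := hF
  haveI := hprob
  have hv1v : v1 < vbar := lt_of_le_of_lt hv1μ hμv
  have hvb : 0 < vbar := hμ.trans hμv
  set q := (F (Icc v1 vbar)).toReal with hqdef
  have hq0 : 0 ≤ q := ENNReal.toReal_nonneg
  -- a.e. support
  have hcompl : F (Icc (0:ℝ) vbar)ᶜ = 0 := by
    have h := measure_compl (μ := F) (s := Icc (0:ℝ) vbar) measurableSet_Icc
      (measure_ne_top F _)
    rw [hsupp, measure_univ] at h
    simpa using h
  have hae : ∀ᵐ t ∂F, t ∈ Icc (0:ℝ) vbar := by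
    rw [ae_iff]
    exact hcompl
  -- mean upper bound
  set g : ℝ → ℝ := fun t => v1 + (vbar - v1) * (Icc v1 vbar).indicator (fun _ => (1:ℝ)) t
    with hg
  have hgi1 : Integrable (fun t : ℝ => (vbar - v1) * (Icc v1 vbar).indicator
      (fun _ => (1:ℝ)) t) F :=
    (((integrable_const (1:ℝ)).indicator measurableSet_Icc).const_mul _)
  have hgint : Integrable g F := (integrable_const v1).add hgi1
  have hfint : Integrable (fun t : ℝ => t) F := by
    refine Integrable.mono' (integrable_const vbar) measurable_id.aestronglyMeasurable ?_
    filter_upwards [hae] with t ht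
    rw [Real.norm_eq_abs, abs_le]
    exact ⟨by linarith [ht.1], ht.2⟩
  have hle : ∀ᵐ t ∂F, t ≤ g t := by
    filter_upwards [hae] with t ht
    by_cases hmem : t ∈ Icc v1 vbar
    · simp only [hg, indicator_of_mem hmem]
      linarith [ht.2]
    · simp only [hg, indicator_of_notMem hmem, mul_zero, add_zero]
      by_contra h
      push_neg at h
      exact hmem ⟨h.le, ht.2⟩
  have hgval : ∫ t, g t ∂F = v1 + (vbar - v1) * q := by
    rw [hg, integral_add (integrable_const v1) hgi1, integral_const, probReal_univ,
      integral_const_mul, integral_indicator_const (1:ℝ) measurableSet_Icc]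
    simp [hqdef, Measure.real]
  have hmean2 : ∫ t, t ∂F ≤ v1 + (vbar - v1) * q :=
    (integral_mono_ae hfint hgint hle).trans hgval.le
  have hqstar : (μ - v1) / (vbar - v1) ≤ q := by
    rw [div_le_iff₀ (by linarith)]
    nlinarith [hmean.trans hmean2]
  by_cases hq : q = 0
  · have h0 : (μ - v1) / (vbar - v1) ≤ 0 := hqstar.trans_eq hq
    calc min (v1 / vbar) ((μ - v1) / (vbar - v1)) ≤ 0 := (min_le_right _ _).trans h0
      _ = v1 * q / hindsightOpt vbar F := by rw [hq]; simp
  · have hqpos : 0 < q := lt_of_le_of_ne hq0 (Ne.symm hq)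
    have hOPTge : v1 * q ≤ hindsightOpt vbar F := le_opt ⟨hv1.le, hv1v.le⟩
    have hOPTpos : 0 < hindsightOpt vbar F := lt_of_lt_of_le (by positivity) hOPTge
    have hOPTle : hindsightOpt vbar F ≤ max v1 (vbar * q) := by
      refine opt_le hvb.le fun p hp0 hpv => ?_
      rcases le_total p v1 with hpc | hpc
      · refine le_trans ?_ (le_max_left _ _)
        calc p * (F (Icc p vbar)).toReal ≤ p * 1 :=
              mul_le_mul_of_nonneg_left (toReal_le_one _) hp0
          _ ≤ v1 := by rw [mul_one]; exact hpc
      · refine le_trans ?_ (le_max_right _ _)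
        have hmono : (F (Icc p vbar)).toReal ≤ q :=
          ENNReal.toReal_mono (measure_ne_top F _) (measure_mono (Icc_subset_Icc_left hpc))
        exact mul_le_mul hpv hmono ENNReal.toReal_nonneg hvb.le
    have key : min (v1 / vbar) ((μ - v1) / (vbar - v1)) ≤ v1 * q / max v1 (vbar * q) := by
      rcases le_total (vbar * q) v1 with hc | hc
      · rw [max_eq_left hc]
        have hqq : v1 * q / v1 = q := by field_simp
        rw [hqq]
        exact (min_le_right _ _).trans hqstar
      · rw [max_eq_right hc]
        have : v1 * q / (vbar * q) = v1 / vbar := by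
          rw [mul_div_mul_right _ _ hq]
        rw [this]
        exact min_le_left _ _
    refine key.trans ?_
    exact div_le_div_of_nonneg_left (by positivity) hOPTpos hOPTle


lemma bddBelow_ratio {μ vbar v1 : ℝ} (hv1 : 0 ≤ v1) (hvb : 0 ≤ vbar) :
    BddBelow (range fun F : ↥(Fmean μ vbar) =>
      v1 * (F.1 (Icc v1 vbar)).toReal / hindsightOpt vbar F.1) := by
  refine ⟨0, ?_⟩
  rintro y ⟨F, rfl⟩
  exact div_nonneg (mul_nonneg hv1 ENNReal.toReal_nonneg) (opt_nonneg hvb _)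

end Stmt4Aux

/-- Under the mean ambiguity set, the competitive ratio of a posted price `v₁ ∈ (0, μ]` is
`min{v₁/v̄, (μ - v₁)/(v̄ - v₁)}`, and of a posted price `v₁ ∈ (μ, v̄]` is `0`. -/
theorem stmt4 (μ vbar : ℝ) (hμ : 0 < μ) (hμv : μ < vbar) :
    (∀ v1 : ℝ, 0 < v1 → v1 ≤ μ →
      (⨅ F : ↥(Fmean μ vbar), v1 * (F.1 (Icc v1 vbar)).toReal / hindsightOpt vbar F.1) =
        min (v1 / vbar) ((μ - v1) / (vbar - v1))) ∧
    (∀ v1 : ℝ, μ < v1 → v1 ≤ vbar →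
      (⨅ F : ↥(Fmean μ vbar), v1 * (F.1 (Icc v1 vbar)).toReal / hindsightOpt vbar F.1) = 0) := by
  have hvb : 0 < vbar := hμ.trans hμv
  constructor
  · intro v1 hv1 hv1μ
    have hv1v : v1 < vbar := lt_of_le_of_lt hv1μ hμv
    have hbd := Stmt4Aux.bddBelow_ratio (μ := μ) (vbar := vbar) hv1.le hvb.le
    have hmemx : ∀ x : ℝ, 0 ≤ x → x < v1 →
        Stmt4Aux.twoPt x ((μ - x) / (vbar - x)) vbar ∈ Fmean μ vbar ∧
        0 ≤ (μ - x) / (vbar - x) ∧ (μ - x) / (vbar - x) ≤ 1 := by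
      intro x hx0 hxv1
      have hxμ : x ≤ μ := le_of_lt (lt_of_lt_of_le hxv1 hv1μ)
      have hxvb : x < vbar := lt_of_lt_of_le hxv1 hv1v.le
      have hq0 : 0 ≤ (μ - x) / (vbar - x) := div_nonneg (by linarith) (by linarith)
      have hq1 : (μ - x) / (vbar - x) ≤ 1 := by
        rw [div_le_one (by linarith)]; linarith
      refine ⟨Stmt4Aux.twoPt_mem_Fmean hx0 hxvb.le hq0 hq1 ?_, hq0, hq1⟩
      have hc : (μ - x) / (vbar - x) * (vbar - x) = μ - x :=
        div_mul_cancel₀ _ (by linarith : vbar - x ≠ 0)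
      nlinarith [hc]
    haveI : Nonempty ↥(Fmean μ vbar) :=
      ⟨⟨_, (hmemx (v1 / 2) (by linarith) (by linarith)).1⟩⟩
    have hub : ∀ x : ℝ, 0 < x → x < v1 →
        (⨅ F : ↥(Fmean μ vbar), v1 * (F.1 (Icc v1 vbar)).toReal / hindsightOpt vbar F.1) ≤
          v1 * ((μ - x) / (vbar - x)) / x := by
      intro x hx0 hxv1
      obtain ⟨hmem, hq0, hq1⟩ := hmemx x hx0.le hxv1
      haveI := hmem.1
      refine (ciInf_le hbd ⟨_, hmem⟩).trans ?_
      show v1 * ((Stmt4Aux.twoPt x ((μ - x) / (vbar - x)) vbar) (Icc v1 vbar)).toReal /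
          hindsightOpt vbar _ ≤ _
      rw [Stmt4Aux.twoPt_Icc_toReal hxv1 hv1v.le hq0]
      have hoptx : x ≤ hindsightOpt vbar (Stmt4Aux.twoPt x ((μ - x) / (vbar - x)) vbar) := by
        have h1 : ((Stmt4Aux.twoPt x ((μ - x) / (vbar - x)) vbar) (Icc x vbar)).toReal = 1 :=
          Stmt4Aux.twoPt_Icc_self (by linarith) hq0 hq1
        have h2 := Stmt4Aux.le_opt (F := Stmt4Aux.twoPt x ((μ - x) / (vbar - x)) vbar)
          (p := x) ⟨hx0.le, (by linarith : x ≤ vbar)⟩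
        rwa [h1, mul_one] at h2
      exact div_le_div_of_nonneg_left (mul_nonneg hv1.le hq0) hx0 hoptx
    have huba :
        (⨅ F : ↥(Fmean μ vbar), v1 * (F.1 (Icc v1 vbar)).toReal / hindsightOpt vbar F.1) ≤
          v1 / vbar := by
      obtain ⟨hmem, hq0, hq1⟩ := hmemx (v1 / 2) (by linarith) (by linarith)
      haveI := hmem.1
      have hqpos : 0 < (μ - v1 / 2) / (vbar - v1 / 2) :=
        div_pos (by linarith) (by linarith)
      refine (ciInf_le hbd ⟨_, hmem⟩).trans ?_
      show v1 * ((Stmt4Aux.twoPt (v1 / 2) ((μ - v1 / 2) / (vbar - v1 / 2)) vbar)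
          (Icc v1 vbar)).toReal / hindsightOpt vbar _ ≤ _
      rw [Stmt4Aux.twoPt_Icc_toReal (by linarith) hv1v.le hq0]
      have hoptv : vbar * ((μ - v1 / 2) / (vbar - v1 / 2)) ≤
          hindsightOpt vbar (Stmt4Aux.twoPt (v1 / 2) ((μ - v1 / 2) / (vbar - v1 / 2)) vbar) := by
        have h2 := Stmt4Aux.le_opt (F := Stmt4Aux.twoPt (v1 / 2) ((μ - v1 / 2) / (vbar - v1 / 2)) vbar)
          (p := vbar) ⟨hvb.le, le_refl vbar⟩
        rwa [Stmt4Aux.twoPt_Icc_toReal (by linarith) (le_refl vbar) hq0] at h2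
      calc v1 * ((μ - v1 / 2) / (vbar - v1 / 2)) /
            hindsightOpt vbar (Stmt4Aux.twoPt (v1 / 2) ((μ - v1 / 2) / (vbar - v1 / 2)) vbar) ≤
          v1 * ((μ - v1 / 2) / (vbar - v1 / 2)) / (vbar * ((μ - v1 / 2) / (vbar - v1 / 2))) :=
            div_le_div_of_nonneg_left (mul_nonneg hv1.le hq0) (by positivity) hoptv
        _ = v1 / vbar := mul_div_mul_right _ _ (ne_of_gt hqpos)
    have hubb :
        (⨅ F : ↥(Fmean μ vbar), v1 * (F.1 (Icc v1 vbar)).toReal / hindsightOpt vbar F.1) ≤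
          (μ - v1) / (vbar - v1) := by
      have hcont : ContinuousAt (fun x : ℝ => v1 * ((μ - x) / (vbar - x)) / x) v1 := by
        apply ContinuousAt.div _ continuousAt_id hv1.ne'
        exact continuousAt_const.mul ((continuousAt_const.sub continuousAt_id).div
          (continuousAt_const.sub continuousAt_id)
          (by simpa [sub_eq_zero] using hv1v.ne'))
      have hval : v1 * ((μ - v1) / (vbar - v1)) / v1 = (μ - v1) / (vbar - v1) := by
        rw [mul_comm, mul_div_assoc, div_self hv1.ne', mul_one]
      have htend : Filter.Tendsto (fun x : ℝ => v1 * ((μ - x) / (vbar - x)) / x)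
          (nhdsWithin v1 (Iio v1)) (nhds ((μ - v1) / (vbar - v1))) := by
        have h := hcont.tendsto.mono_left (nhdsWithin_le_nhds (s := Iio v1))
        simpa [hval] using h
      refine ge_of_tendsto htend ?_
      have hev : ∀ᶠ x in nhdsWithin v1 (Iio v1), 0 < x :=
        eventually_nhdsWithin_of_eventually_nhds (eventually_gt_nhds hv1)
      filter_upwards [hev, self_mem_nhdsWithin] with x hx0 hxlt
      exact hub x hx0 hxlt
    exact le_antisymm (le_min huba hubb)
      (le_ciInf fun F => Stmt4Aux.ratio_lower hμ hμv hv1 hv1μ F.2)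
  · intro v1 hμv1 hv1v
    have hv1 : 0 < v1 := hμ.trans hμv1
    have hbd := Stmt4Aux.bddBelow_ratio (μ := μ) (vbar := vbar) hv1.le hvb.le
    have hmem : Measure.dirac μ ∈ Fmean μ vbar := by
      refine ⟨inferInstance, ?_, ?_⟩
      · have hm : μ ∈ Icc (0:ℝ) vbar := ⟨hμ.le, hμv.le⟩
        rw [Measure.dirac_apply' _ measurableSet_Icc, indicator_of_mem hm (1 : ℝ → ℝ≥0∞)]
        rfl
      · rw [integral_dirac]
    haveI : Nonempty ↥(Fmean μ vbar) := ⟨⟨_, hmem⟩⟩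
    have hzero : Measure.dirac μ (Icc v1 vbar) = 0 := by
      rw [Measure.dirac_apply' _ measurableSet_Icc,
        indicator_of_notMem (fun h => absurd h.1 (not_le.2 hμv1))]
    refine le_antisymm ((ciInf_le hbd ⟨_, hmem⟩).trans_eq ?_)
      (le_ciInf fun F => div_nonneg (mul_nonneg hv1.le ENNReal.toReal_nonneg)
        (Stmt4Aux.opt_nonneg hvb.le _))
    show v1 * ((Measure.dirac μ) (Icc v1 vbar)).toReal / hindsightOpt vbar _ = 0
    rw [hzero]
    simp
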